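/- For every a : ZMod d × ZMod d → ℂ with Σ_{r,s} |a_{r,s}|² = 1, the operator P_a satisfies the trace-preservation (normalization) condition: for all k, k' ∈ ZMod d, Σ_{i,j} (P_a)_{(i,j,k),(i,j,k')} = δ_{k,k'}. Hence P_a, being also positive semidefinite, is the operator of a trace-preserving covariant quantum operation. -/

import Mathlib

open Matrix Kronecker BigOperators
open scoped ComplexOrder

/-- ω = exp(2πi/d). -/
noncomputable def omega (d : ℕ) : ℂ := Complex.exp (2 * Real.pi * Complex.I / d)

/-- The Weyl–Heisenberg matrix `U_{p,q}`. -/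
noncomputable def WH (d : ℕ) [NeZero d] (p q : ZMod d) : Matrix (ZMod d) (ZMod d) ℂ :=
  fun j k => if j = k + p then omega d ^ (q.val * k.val) else 0

/-- The operator `P_a` on `(ℂ^d)^⊗3` associated to the coefficients `a`:
`(P_a)_{(i,j,k),(i',j',k')} = (1/d) Σ_{r,s,r',s'} a_{rs} conj(a_{r's'})
  (U_{rs}ᴴ U_{r's'})_{i,i'} (U_{rs})_{j,k} conj((U_{r's'})_{j',k'})`. -/
noncomputable def Pa (d : ℕ) [NeZero d] (a : ZMod d × ZMod d → ℂ) :
    Matrix (ZMod d × ZMod d × ZMod d) (ZMod d × ZMod d × ZMod d) ℂ :=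
  fun x y => (d : ℂ)⁻¹ * ∑ r : ZMod d, ∑ s : ZMod d, ∑ r' : ZMod d, ∑ s' : ZMod d,
    a (r, s) * (starRingEnd ℂ) (a (r', s')) * ((WH d r s)ᴴ * WH d r' s') x.1 y.1 *
      WH d r s x.2.1 x.2.2 * (starRingEnd ℂ) (WH d r' s' y.2.1 y.2.2)

section aux

variable (d : ℕ) [NeZero d]

lemma omega_primroot : IsPrimitiveRoot (omega d) d :=
  Complex.isPrimitiveRoot_exp d (NeZero.ne d)

lemma omega_ne_zero : omega d ≠ 0 := Complex.exp_ne_zero _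

lemma omega_pow_d : omega d ^ d = 1 := (omega_primroot d).pow_eq_one

lemma abs_omega : ‖omega d‖ = 1 := by
  simp [omega, Complex.norm_exp]

lemma conj_omega_pow (n : ℕ) :
    (starRingEnd ℂ) (omega d ^ n) = (omega d ^ n)⁻¹ := by
  rw [← Complex.inv_eq_conj]
  have : ‖omega d ^ n‖ = 1 := by
    rw [norm_pow, abs_omega, one_pow]
  exact this

lemma conj_mul_omega_pow (n : ℕ) :
    (starRingEnd ℂ) (omega d ^ n) * omega d ^ n = 1 := by
  rw [conj_omega_pow, inv_mul_cancel₀ (pow_ne_zero _ (omega_ne_zero d))]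

/-- sum over `ZMod d` as sum over `range d`. -/
lemma zmod_sum_val (f : ℕ → ℂ) :
    ∑ i : ZMod d, f (ZMod.val i) = ∑ n ∈ Finset.range d, f n := by
  refine Finset.sum_nbij' (fun a => ZMod.val a) (fun n => (n : ZMod d)) ?_ ?_ ?_ ?_ ?_
  · intro a _; exact Finset.mem_range.mpr (ZMod.val_lt a)
  · intro n _; exact Finset.mem_univ _
  · intro a _; exact ZMod.natCast_zmod_val a
  · intro n hn; exact ZMod.val_cast_of_lt (Finset.mem_range.mp hn)
  · intro a _; rfl

lemma geom_zmod (z : ℂ) (hz : z ^ d = 1) :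
    ∑ i : ZMod d, z ^ (ZMod.val i) = if z = 1 then (d : ℂ) else 0 := by
  rw [zmod_sum_val]
  split_ifs with h
  · subst h; simp
  · rw [geom_sum_eq h, hz, sub_self, zero_div]

/-- The character orthogonality sum. -/
lemma char_sum (s s' : ZMod d) :
    ∑ i : ZMod d, (starRingEnd ℂ) (omega d ^ (s.val * ZMod.val i)) *
        omega d ^ (s'.val * ZMod.val i) = if s = s' then (d : ℂ) else 0 := by
  have hne := omega_ne_zero d
  have key : ∀ i : ZMod d,
      (starRingEnd ℂ) (omega d ^ (s.val * ZMod.val i)) * omega d ^ (s'.val * ZMod.val i)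
      = (omega d ^ ((s'.val : ℤ) - (s.val : ℤ))) ^ (ZMod.val i) := by
    intro i
    rw [conj_omega_pow]
    rw [← zpow_natCast (omega d) (s.val * ZMod.val i), ← zpow_natCast (omega d) (s'.val * ZMod.val i),
      ← _root_.zpow_neg, ← zpow_add₀ hne, ← zpow_natCast (omega d ^ ((s'.val : ℤ) - (s.val : ℤ))),
      ← _root_.zpow_mul]
    congr 1
    push_cast
    ring
  simp_rw [key]
  have hz : (omega d ^ ((s'.val : ℤ) - (s.val : ℤ))) ^ d = 1 := by
    rw [← zpow_natCast, ← _root_.zpow_mul, mul_comm, _root_.zpow_mul, zpow_natCast, omega_pow_d, _root_.one_zpow]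
  rw [geom_zmod d _ hz]
  congr 1
  rw [eq_iff_iff]
  rw [(omega_primroot d).zpow_eq_one_iff_dvd]
  constructor
  · intro h
    have h0 : (((s'.val : ℤ) - (s.val : ℤ) : ℤ) : ZMod d) = 0 :=
      (ZMod.intCast_zmod_eq_zero_iff_dvd _ d).mpr h
    push_cast at h0
    rw [ZMod.natCast_zmod_val, ZMod.natCast_zmod_val, sub_eq_zero] at h0
    exact h0.symm
  · intro h; subst h; simp

/-- entry of `(WH r s)ᴴ * WH r' s'`. -/
lemma WH_conjT_mul (r s r' s' i i' : ZMod d) :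
    ((WH d r s)ᴴ * WH d r' s') i i' =
      if i + r = i' + r' then
        (starRingEnd ℂ) (omega d ^ (s.val * i.val)) * omega d ^ (s'.val * i'.val)
      else 0 := by
  rw [Matrix.mul_apply]
  simp only [Matrix.conjTranspose_apply, WH, apply_ite (star : ℂ → ℂ), star_zero,
    ite_mul, zero_mul, mul_ite, mul_zero, starRingEnd_apply]
  rw [Finset.sum_ite_eq' Finset.univ (i' + r')]
  simp only [Finset.mem_univ, if_true]
  by_cases h : i + r = i' + r'
  · simp [h]
  · rw [if_neg (fun hh => h hh.symm), if_neg h]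

end aux

section main

variable (d : ℕ) [NeZero d] (a : ZMod d × ZMod d → ℂ)

private lemma sum_swap41 {M : Type*} [AddCommMonoid M] {ι κ₁ κ₂ κ₃ κ₄ : Type*}
    [Fintype ι] [Fintype κ₁] [Fintype κ₂] [Fintype κ₃] [Fintype κ₄]
    (F : ι → κ₁ → κ₂ → κ₃ → κ₄ → M) :
    ∑ i : ι, ∑ r : κ₁, ∑ s : κ₂, ∑ r' : κ₃, ∑ s' : κ₄, F i r s r' s'
      = ∑ r : κ₁, ∑ s : κ₂, ∑ r' : κ₃, ∑ s' : κ₄, ∑ i : ι, F i r s r' s' := by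
  rw [Finset.sum_comm]
  refine Finset.sum_congr rfl fun r _ => ?_
  rw [Finset.sum_comm]
  refine Finset.sum_congr rfl fun s _ => ?_
  rw [Finset.sum_comm]
  refine Finset.sum_congr rfl fun r' _ => ?_
  rw [Finset.sum_comm]

private lemma sum_swap31 {M : Type*} [AddCommMonoid M] {ι κ₁ κ₂ κ₃ : Type*}
    [Fintype ι] [Fintype κ₁] [Fintype κ₂] [Fintype κ₃]
    (F : ι → κ₁ → κ₂ → κ₃ → M) :
    ∑ i : ι, ∑ r : κ₁, ∑ s : κ₂, ∑ t : κ₃, F i r s t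
      = ∑ r : κ₁, ∑ s : κ₂, ∑ t : κ₃, ∑ i : ι, F i r s t := by
  rw [Finset.sum_comm]
  refine Finset.sum_congr rfl fun r _ => ?_
  rw [Finset.sum_comm]
  refine Finset.sum_congr rfl fun s _ => ?_
  rw [Finset.sum_comm]

noncomputable def wvec (m : ZMod d) (x : ZMod d × ZMod d × ZMod d) : ℂ :=
  ∑ r : ZMod d, ∑ s : ZMod d,
    a (r, s) * (starRingEnd ℂ) (WH d r s m x.1) * WH d r s x.2.1 x.2.2

lemma Pa_eq (x y : ZMod d × ZMod d × ZMod d) :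
    Pa d a x y = (d : ℂ)⁻¹ * ∑ m : ZMod d, wvec d a m x * (starRingEnd ℂ) (wvec d a m y) := by
  simp only [Pa, wvec, Matrix.mul_apply, Matrix.conjTranspose_apply, starRingEnd_apply,
    star_sum, star_mul', star_star, Finset.mul_sum, Finset.sum_mul]
  conv_rhs => rw [sum_swap41]
  conv_rhs => rw [sum_swap31]
  conv_rhs => rw [sum_swap31]
  refine Finset.sum_congr rfl fun r _ => Finset.sum_congr rfl fun s _ => ?_
  refine Finset.sum_congr rfl fun r' _ => Finset.sum_congr rfl fun s' _ => ?_
  refine Finset.sum_congr rfl fun m _ => ?_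
  ring

lemma diag_sum (r s r' s' : ZMod d) :
    ∑ i : ZMod d, ((WH d r s)ᴴ * WH d r' s') i i =
      if r = r' ∧ s = s' then (d : ℂ) else 0 := by
  simp_rw [WH_conjT_mul, add_right_inj]
  by_cases hr : r = r'
  · subst hr
    simp only [eq_self_iff_true, if_true, true_and]
    exact char_sum d s s'
  · simp [hr]

lemma offdiag_sum (r s r' s' k k' : ZMod d) :
    ∑ j : ZMod d, WH d r s j k * (starRingEnd ℂ) (WH d r' s' j k') =
      if k + r = k' + r' then
        omega d ^ (s.val * k.val) * (starRingEnd ℂ) (omega d ^ (s'.val * k'.val))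
      else 0 := by
  simp only [WH, apply_ite (starRingEnd ℂ), map_zero, ite_mul, zero_mul, mul_ite, mul_zero]
  rw [Finset.sum_ite_eq' Finset.univ (k' + r')]
  simp only [Finset.mem_univ, if_true]
  by_cases h : k + r = k' + r'
  · simp [h]
  · rw [if_neg (fun hh => h hh.symm), if_neg h]

lemma double_delta (g : ZMod d → ZMod d → ℂ) (r s : ZMod d) :
    ∑ r' : ZMod d, ∑ s' : ZMod d, (if r = r' ∧ s = s' then g r' s' else 0) = g r s := by
  have h1 : ∀ r' : ZMod d, (∑ s' : ZMod d, if r = r' ∧ s = s' then g r' s' else 0)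
      = if r = r' then g r' s else 0 := by
    intro r'
    by_cases h : r = r' <;> simp [h]
  simp_rw [h1]
  simp

end main

/-- For normalized coefficients `a`, `P_a` satisfies the trace-preservation condition
`Σ_{i,j} (P_a)_{(i,j,k),(i,j,k')} = δ_{k,k'}` and is positive semidefinite; hence it is
the operator of a trace-preserving covariant quantum operation. -/
theorem Pa_trace_preserving (d : ℕ) [NeZero d] (a : ZMod d × ZMod d → ℂ)
    (ha : ∑ rs : ZMod d × ZMod d, ‖a rs‖ ^ 2 = 1) :
    (∀ k k' : ZMod d,
      (∑ i : ZMod d, ∑ j : ZMod d, Pa d a (i, j, k) (i, j, k')) =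
        if k = k' then 1 else 0) ∧
    (Pa d a).PosSemidef := by
  constructor
  · intro k k'
    simp only [Pa]
    simp_rw [← Finset.mul_sum]
    conv_lhs => rhs; arg 2; ext i; rw [sum_swap41]
    conv_lhs => rhs; rw [sum_swap41]
    have hX : ∀ r s r' s' : ZMod d,
        (∑ i : ZMod d, ∑ j : ZMod d,
          a (r, s) * (starRingEnd ℂ) (a (r', s')) * ((WH d r s)ᴴ * WH d r' s') i i *
            WH d r s j k * (starRingEnd ℂ) (WH d r' s' j k'))
        = if r = r' ∧ s = s' then
            a (r, s) * (starRingEnd ℂ) (a (r', s')) * (d : ℂ) *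
              (if k + r = k' + r' then
                omega d ^ (s.val * k.val) * (starRingEnd ℂ) (omega d ^ (s'.val * k'.val))
              else 0)
          else 0 := by
      intro r s r' s'
      have hfac : (∑ i : ZMod d, ∑ j : ZMod d,
          a (r, s) * (starRingEnd ℂ) (a (r', s')) * ((WH d r s)ᴴ * WH d r' s') i i *
            WH d r s j k * (starRingEnd ℂ) (WH d r' s' j k'))
          = a (r, s) * (starRingEnd ℂ) (a (r', s')) *
              ((∑ i : ZMod d, ((WH d r s)ᴴ * WH d r' s') i i) *
               (∑ j : ZMod d, WH d r s j k * (starRingEnd ℂ) (WH d r' s' j k'))) := by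
        rw [Finset.sum_mul_sum]
        simp_rw [Finset.mul_sum]
        refine Finset.sum_congr rfl fun i _ => Finset.sum_congr rfl fun j _ => ?_
        ring
      rw [hfac, _root_.diag_sum, offdiag_sum]
      by_cases h : r = r' ∧ s = s'
      · rcases h with ⟨rfl, rfl⟩
        simp only [and_self, if_true, eq_self_iff_true]
        ring
      · simp [h]
    simp_rw [hX]
    rw [show (∑ r : ZMod d, ∑ s : ZMod d, ∑ r' : ZMod d, ∑ s' : ZMod d,
        (if r = r' ∧ s = s' then
            a (r, s) * (starRingEnd ℂ) (a (r', s')) * (d : ℂ) *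
              (if k + r = k' + r' then
                omega d ^ (s.val * k.val) * (starRingEnd ℂ) (omega d ^ (s'.val * k'.val))
              else 0)
          else 0))
      = ∑ r : ZMod d, ∑ s : ZMod d,
          a (r, s) * (starRingEnd ℂ) (a (r, s)) * (d : ℂ) *
            (if k + r = k' + r then
              omega d ^ (s.val * k.val) * (starRingEnd ℂ) (omega d ^ (s.val * k'.val))
            else 0)
      from Finset.sum_congr rfl fun r _ => Finset.sum_congr rfl fun s _ =>
        double_delta d _ r s]
    simp_rw [add_left_inj]
    by_cases hk : k = k'
    · subst hk
      simp only [if_pos rfl]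
      have homega : ∀ n : ℕ, omega d ^ n * (starRingEnd ℂ) (omega d ^ n) = 1 := fun n => by
        rw [mul_comm]; exact conj_mul_omega_pow d n
      simp_rw [homega]
      simp only [if_true, mul_one]
      simp_rw [Complex.mul_conj]
      have ha' : ∑ r : ZMod d, ∑ s : ZMod d, (Complex.normSq (a (r, s)) : ℂ) = 1 := by
        have h2 := ha
        rw [Fintype.sum_prod_type] at h2
        have h1 : ∑ r : ZMod d, ∑ s : ZMod d, Complex.normSq (a (r, s)) = 1 := by
          simp_rw [← Complex.sq_norm]; exact h2
        calc ∑ r : ZMod d, ∑ s : ZMod d, (Complex.normSq (a (r, s)) : ℂ)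
            = ((∑ r : ZMod d, ∑ s : ZMod d, Complex.normSq (a (r, s)) : ℝ) : ℂ) := by
              push_cast; rfl
          _ = 1 := by rw [h1]; norm_num
      simp_rw [← Finset.sum_mul]
      rw [ha', one_mul, inv_mul_cancel₀ (Nat.cast_ne_zero.mpr (NeZero.ne d))]
    · simp [hk]
  · have hc : (((Real.sqrt d : ℝ) : ℂ))⁻¹ * star ((((Real.sqrt d : ℝ) : ℂ))⁻¹) = (d : ℂ)⁻¹ := by
      simp only [← Complex.ofReal_inv, Complex.star_def, Complex.conj_ofReal,
        ← Complex.ofReal_mul, ← mul_inv, Real.mul_self_sqrt (Nat.cast_nonneg d)]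
      push_cast
      rfl
    have hrep : Pa d a = ∑ m : ZMod d,
        (Matrix.of fun x (_ : Unit) => ((Real.sqrt d : ℝ) : ℂ)⁻¹ * wvec d a m x) *
        (Matrix.of fun x (_ : Unit) => ((Real.sqrt d : ℝ) : ℂ)⁻¹ * wvec d a m x)ᴴ := by
      ext x y
      rw [Pa_eq, Matrix.sum_apply]
      rw [Finset.mul_sum]
      refine Finset.sum_congr rfl fun m _ => ?_
      simp only [Matrix.mul_apply, Matrix.conjTranspose_apply, Matrix.of_apply,
        Finset.univ_unique, Finset.sum_singleton, star_mul', starRingEnd_apply]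
      rw [← hc]
      ring
    rw [hrep]
    refine Finset.sum_induction _ _ (fun A B hA hB => hA.add hB) Matrix.PosSemidef.zero
      fun m _ => Matrix.posSemidef_self_mul_conjTranspose _
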